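/- Let G = (V, w) be a weighted graph, X = {u, v, z} ⊆ V a set of three distinct nodes, and X̃ ⊆ X. Let w̃ denote the weights of G' = flip_{X̃}(G). Define the triangle score ν̂_t(X) = min over x ∈ X of ( Σ_{y ∈ X\{x}} w̃(x,y) − min( ‖w^(x)‖ − Σ_{y ∈ X\{x}} |w(x,y)| , Σ_{y ∈ X\{x}} ( ‖w^(y)‖ − Σ_{z' ∈ X\{y}} |w(y,z')| ) ) ). If ν̂_t(X) > 0, then X is non-separable in G'; consequently, X̃ and X \ X̃ are non-separable in G, and for every a ∈ X̃ and b ∈ X \ X̃ the pair (a, b) is antipolar in G (ν_G({a,b}) < 0). -/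
import Mathlib


open Finset

variable {V : Type*}

/-- Cut capacity of a cut `S` in the weighted graph `(V, w)`:
`c(S) = Σ_{u ∈ S, v ∈ V \ S} w(u,v)`. -/
noncomputable def cutVal [Fintype V] [DecidableEq V] (w : V → V → ℝ) (S : Finset V) : ℝ :=
  ∑ u ∈ S, ∑ v ∈ Sᶜ, w u v

/-- Minimum cut value `MC(G) = min_{S ⊆ V} c(S)` (cuts range over all subsets). -/
noncomputable def minCutVal [Fintype V] [DecidableEq V] (w : V → V → ℝ) : ℝ :=
  sInf (Set.range (cutVal w))

/-- `S` separates `X` iff `X ∩ S ∉ {∅, X}`. -/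
def Separates [DecidableEq V] (S X : Finset V) : Prop :=
  X ∩ S ≠ ∅ ∧ X ∩ S ≠ X

/-- `X` is non-separable: no min-cut separates `X`. -/
def NonSepSet [Fintype V] [DecidableEq V] (w : V → V → ℝ) (X : Finset V) : Prop :=
  ∀ S : Finset V, cutVal w S = minCutVal w → ¬ Separates S X

/-- `X` is weakly non-separable: some min-cut separates `X` and some min-cut does not. -/
def WeakNonSepSet [Fintype V] [DecidableEq V] (w : V → V → ℝ) (X : Finset V) : Prop :=
  (∃ S : Finset V, cutVal w S = minCutVal w ∧ Separates S X) ∧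
  (∃ S : Finset V, cutVal w S = minCutVal w ∧ ¬ Separates S X)

/-- Non-separability index
`ν_G(X) = min_{S ⊆ V, S ⊖ X} c(S) − min_{S ⊆ V, ¬(S ⊖ X)} c(S)`. -/
noncomputable def nuIdx [Fintype V] [DecidableEq V] (w : V → V → ℝ) (X : Finset V) : ℝ :=
  sInf (cutVal w '' {S : Finset V | Separates S X}) -
  sInf (cutVal w '' {S : Finset V | ¬ Separates S X})

/-- `flip_T(G)`: negate the weight of each edge with exactly one endpoint in `T`. -/
noncomputable def flipSet [DecidableEq V] (w : V → V → ℝ) (T : Finset V) (a b : V) : ℝ :=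
  if (a ∈ T ∧ b ∉ T) ∨ (b ∈ T ∧ a ∉ T) then -w a b else w a b

set_option linter.unusedSectionVars false
set_option linter.unusedVariables false

section Helpers
variable [Fintype V] [DecidableEq V]

lemma cutVal_compl (w : V → V → ℝ) (hsymm : ∀ a b, w a b = w b a) (S : Finset V) :
    cutVal w Sᶜ = cutVal w S := by
  unfold cutVal
  rw [compl_compl, Finset.sum_comm]
  exact Finset.sum_congr rfl fun u _ => Finset.sum_congr rfl fun v _ => hsymm v u

lemma flip_symm (w : V → V → ℝ) (hsymm : ∀ a b, w a b = w b a) (T : Finset V) :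
    ∀ a b, flipSet w T a b = flipSet w T b a := by
  intro a b
  unfold flipSet
  by_cases ha : a ∈ T <;> by_cases hb : b ∈ T <;> simp [ha, hb, hsymm a b]

lemma flip_abs (w : V → V → ℝ) (T : Finset V) (a b : V) :
    |flipSet w T a b| = |w a b| := by
  unfold flipSet; split <;> simp

noncomputable def xcut (w : V → V → ℝ) (S : Finset V) : ℝ :=
  ∑ u, ∑ v, if (u ∈ S ∧ v ∉ S) ∨ (v ∈ S ∧ u ∉ S) then w u v else 0

lemma xcut_eq (w : V → V → ℝ) (hsymm : ∀ a b, w a b = w b a) (S : Finset V) :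
    xcut w S = 2 * cutVal w S := by
  have h1 : ∀ u v : V, (if (u ∈ S ∧ v ∉ S) ∨ (v ∈ S ∧ u ∉ S) then w u v else 0)
      = (if u ∈ S ∧ v ∉ S then w u v else 0) + (if v ∈ S ∧ u ∉ S then w u v else 0) := by
    intro u v
    by_cases hu : u ∈ S <;> by_cases hv : v ∈ S <;> simp [hu, hv]
  have h2 : (∑ u, ∑ v, if u ∈ S ∧ v ∉ S then w u v else 0) = cutVal w S := by
    unfold cutVal
    rw [← Finset.sum_add_sum_compl S]
    have hz : (∑ u ∈ Sᶜ, ∑ v, if u ∈ S ∧ v ∉ S then w u v else 0) = 0 := by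
      apply Finset.sum_eq_zero; intro u hu
      apply Finset.sum_eq_zero; intro v _
      simp_all [Finset.mem_compl]
    rw [hz, add_zero]
    apply Finset.sum_congr rfl; intro u hu
    rw [← Finset.sum_add_sum_compl S]
    have hz2 : (∑ v ∈ S, if u ∈ S ∧ v ∉ S then w u v else 0) = 0 := by
      apply Finset.sum_eq_zero; intro v hv; simp [hv]
    rw [hz2, zero_add]
    apply Finset.sum_congr rfl; intro v hv
    simp_all [Finset.mem_compl]
  have h3 : (∑ u, ∑ v, if v ∈ S ∧ u ∉ S then w u v else 0) = cutVal w S := by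
    rw [Finset.sum_comm]
    rw [← h2]
    exact Finset.sum_congr rfl fun a _ => Finset.sum_congr rfl fun b _ => by rw [hsymm b a]
  unfold xcut
  calc (∑ u, ∑ v, if (u ∈ S ∧ v ∉ S) ∨ (v ∈ S ∧ u ∉ S) then w u v else 0)
      = (∑ u, ∑ v, ((if u ∈ S ∧ v ∉ S then w u v else 0) + (if v ∈ S ∧ u ∉ S then w u v else 0))) := by
        exact Finset.sum_congr rfl fun u _ => Finset.sum_congr rfl fun v _ => h1 u v
    _ = 2 * cutVal w S := by
        simp only [Finset.sum_add_distrib]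
        rw [h2, h3]; ring

lemma xcut_flip (w : V → V → ℝ) (T S : Finset V) :
    xcut (flipSet w T) S + xcut w T = xcut w (symmDiff S T) := by
  unfold xcut
  rw [← Finset.sum_add_distrib]
  apply Finset.sum_congr rfl; intro u _
  rw [← Finset.sum_add_distrib]
  apply Finset.sum_congr rfl; intro v _
  by_cases hu : u ∈ S <;> by_cases hv : v ∈ S <;> by_cases hu' : u ∈ T <;> by_cases hv' : v ∈ T <;>
    simp [flipSet, Finset.mem_symmDiff, hu, hv, hu', hv']

lemma cutVal_flip (w : V → V → ℝ) (hsymm : ∀ a b, w a b = w b a) (T S : Finset V) :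
    cutVal (flipSet w T) S = cutVal w (symmDiff S T) - cutVal w T := by
  have h := xcut_flip w T S
  rw [xcut_eq w hsymm, xcut_eq w hsymm, xcut_eq (flipSet w T) (flip_symm w hsymm T)] at h
  linarith

-- move-out estimate
lemma moveOut (w : V → V → ℝ) (hsymm : ∀ a b, w a b = w b a)
    (X S : Finset V) (x : V) (hXS : X ∩ S = {x}) :
    cutVal w (S \ {x}) ≤ cutVal w S - (∑ y ∈ X \ {x}, w x y) + ∑ t ∈ Xᶜ, |w x t| := by
  have hxS : x ∈ S := by
    have : x ∈ X ∩ S := hXS ▸ Finset.mem_singleton_self x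
    exact (Finset.mem_inter.mp this).2
  have hxX : x ∈ X := by
    have : x ∈ X ∩ S := hXS ▸ Finset.mem_singleton_self x
    exact (Finset.mem_inter.mp this).1
  have hYc : X \ {x} ⊆ Sᶜ := by
    intro y hy
    rw [Finset.mem_sdiff, Finset.mem_singleton] at hy
    rw [Finset.mem_compl]
    intro hyS
    exact hy.2 (Finset.mem_singleton.mp (hXS ▸ Finset.mem_inter.mpr ⟨hy.1, hyS⟩))
  -- c(S) split
  have hcS : cutVal w S = (∑ a ∈ S \ {x}, ∑ b ∈ Sᶜ, w a b) + ∑ b ∈ Sᶜ, w x b := by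
    unfold cutVal
    rw [Finset.sum_eq_sum_sdiff_singleton_add hxS]
  have hcS' : cutVal w (S \ {x}) =
      (∑ a ∈ S \ {x}, ∑ b ∈ Sᶜ, w a b) + ∑ a ∈ S \ {x}, w a x := by
    unfold cutVal
    have hcompl : (S \ {x})ᶜ = insert x Sᶜ := by
      ext b
      simp [Finset.mem_compl, Finset.mem_sdiff, Finset.mem_insert]
      tauto
    rw [hcompl, ← Finset.sum_add_distrib]
    apply Finset.sum_congr rfl; intro a ha
    rw [Finset.sum_insert (by simp [Finset.mem_compl, hxS]), add_comm]
  -- split outer sum over Sᶜ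
  have hsplit : (∑ b ∈ Sᶜ, w x b) =
      (∑ b ∈ Sᶜ \ (X \ {x}), w x b) + ∑ y ∈ X \ {x}, w x y :=
    (Finset.sum_sdiff hYc).symm
  -- bound the error terms
  have hE1 : Sᶜ \ (X \ {x}) ⊆ Xᶜ := by
    intro b hb
    rw [Finset.mem_sdiff, Finset.mem_compl] at hb
    rw [Finset.mem_compl]
    intro hbX
    rcases hb with ⟨hbS, hb2⟩
    rw [Finset.mem_sdiff, Finset.mem_singleton] at hb2
    push_neg at hb2
    have : b = x := hb2 hbX
    exact hbS (this ▸ hxS)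
  have hE2 : S \ {x} ⊆ Xᶜ := by
    intro a ha
    rw [Finset.mem_sdiff, Finset.mem_singleton] at ha
    rw [Finset.mem_compl]
    intro haX
    exact ha.2 (Finset.mem_singleton.mp (hXS ▸ Finset.mem_inter.mpr ⟨haX, ha.1⟩))
  have hdisj : Disjoint (Sᶜ \ (X \ {x})) (S \ {x}) := by
    apply Finset.disjoint_left.mpr
    intro b hb hb'
    rw [Finset.mem_sdiff, Finset.mem_compl] at hb
    rw [Finset.mem_sdiff] at hb'
    exact hb.1 hb'.1
  have hbound : (∑ a ∈ S \ {x}, w a x) - (∑ b ∈ Sᶜ \ (X \ {x}), w x b) ≤ ∑ t ∈ Xᶜ, |w x t| := by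
    have b1 : (∑ a ∈ S \ {x}, w a x) ≤ ∑ a ∈ S \ {x}, |w x a| := by
      apply Finset.sum_le_sum; intro a _; rw [hsymm a x]; exact le_abs_self _
    have b2 : -(∑ b ∈ Sᶜ \ (X \ {x}), w x b) ≤ ∑ b ∈ Sᶜ \ (X \ {x}), |w x b| := by
      rw [← Finset.sum_neg_distrib]
      exact Finset.sum_le_sum fun b _ => neg_le_abs _
    have b3 : (∑ b ∈ Sᶜ \ (X \ {x}), |w x b|) + ∑ a ∈ S \ {x}, |w x a|
        = ∑ t ∈ (Sᶜ \ (X \ {x})) ∪ (S \ {x}), |w x t| :=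
      (Finset.sum_union hdisj).symm
    have b4 : (∑ t ∈ (Sᶜ \ (X \ {x})) ∪ (S \ {x}), |w x t|) ≤ ∑ t ∈ Xᶜ, |w x t| := by
      apply Finset.sum_le_sum_of_subset_of_nonneg
      · exact Finset.union_subset hE1 hE2
      · intro t _ _; exact abs_nonneg _
    linarith
  linarith [hcS, hcS', hsplit, hbound]

lemma moveIn (w : V → V → ℝ) (hsymm : ∀ a b, w a b = w b a)
    (X S : Finset V) (x : V) (hXS : X ∩ S = {x}) :
    cutVal w (S ∪ (X \ {x})) ≤ cutVal w S - (∑ y ∈ X \ {x}, w x y)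
      + ∑ y ∈ X \ {x}, ∑ t ∈ Xᶜ, |w y t| := by
  have hxS : x ∈ S := by
    have : x ∈ X ∩ S := hXS ▸ Finset.mem_singleton_self x
    exact (Finset.mem_inter.mp this).2
  have hxX : x ∈ X := by
    have : x ∈ X ∩ S := hXS ▸ Finset.mem_singleton_self x
    exact (Finset.mem_inter.mp this).1
  set Y := X \ {x} with hY
  have hYc : Y ⊆ Sᶜ := by
    intro y hy
    rw [hY, Finset.mem_sdiff, Finset.mem_singleton] at hy
    rw [Finset.mem_compl]
    intro hyS
    exact hy.2 (Finset.mem_singleton.mp (hXS ▸ Finset.mem_inter.mpr ⟨hy.1, hyS⟩))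
  have hdisjSY : Disjoint S Y := by
    rw [Finset.disjoint_right]
    intro y hy
    exact Finset.mem_compl.mp (hYc hy)
  have hcomplU : (S ∪ Y)ᶜ = Sᶜ \ Y := by
    ext b; simp [Finset.mem_compl, Finset.mem_sdiff, Finset.mem_union, and_comm]
  -- c(S∪Y)
  have hcU : cutVal w (S ∪ Y) =
      (∑ a ∈ S, ∑ b ∈ Sᶜ \ Y, w a b) + ∑ a ∈ Y, ∑ b ∈ Sᶜ \ Y, w a b := by
    unfold cutVal
    rw [Finset.sum_union hdisjSY, hcomplU]
  -- c(S)
  have hcS : cutVal w S =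
      (∑ a ∈ S, ∑ b ∈ Sᶜ \ Y, w a b) + ∑ a ∈ S, ∑ y ∈ Y, w a y := by
    unfold cutVal
    rw [← Finset.sum_add_distrib]
    apply Finset.sum_congr rfl; intro a _
    exact (Finset.sum_sdiff hYc).symm
  -- split the S-to-Y sum at a = x
  have hsplitx : (∑ a ∈ S, ∑ y ∈ Y, w a y) =
      (∑ a ∈ S \ {x}, ∑ y ∈ Y, w a y) + ∑ y ∈ Y, w x y := by
    rw [Finset.sum_eq_sum_sdiff_singleton_add hxS]
  -- subsets of Xᶜ
  have hE1 : Sᶜ \ Y ⊆ Xᶜ := by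
    intro b hb
    rw [Finset.mem_sdiff, Finset.mem_compl] at hb
    rw [Finset.mem_compl]
    intro hbX
    rcases hb with ⟨hbS, hb2⟩
    rw [hY, Finset.mem_sdiff, Finset.mem_singleton] at hb2
    push_neg at hb2
    exact hbS ((hb2 hbX) ▸ hxS)
  have hE2 : S \ {x} ⊆ Xᶜ := by
    intro a ha
    rw [Finset.mem_sdiff, Finset.mem_singleton] at ha
    rw [Finset.mem_compl]
    intro haX
    exact ha.2 (Finset.mem_singleton.mp (hXS ▸ Finset.mem_inter.mpr ⟨haX, ha.1⟩))
  have hdisj : Disjoint (Sᶜ \ Y) (S \ {x}) := by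
    apply Finset.disjoint_left.mpr
    intro b hb hb'
    rw [Finset.mem_sdiff, Finset.mem_compl] at hb
    rw [Finset.mem_sdiff] at hb'
    exact hb.1 hb'.1
  -- per-y bound
  have hbound : (∑ a ∈ Y, ∑ b ∈ Sᶜ \ Y, w a b) - (∑ a ∈ S \ {x}, ∑ y ∈ Y, w a y)
      ≤ ∑ y ∈ Y, ∑ t ∈ Xᶜ, |w y t| := by
    rw [Finset.sum_comm (s := S \ {x})]
    rw [← Finset.sum_sub_distrib]
    apply Finset.sum_le_sum
    intro y _
    have b1 : (∑ b ∈ Sᶜ \ Y, w y b) ≤ ∑ b ∈ Sᶜ \ Y, |w y b| :=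
      Finset.sum_le_sum fun b _ => le_abs_self _
    have b2 : -(∑ a ∈ S \ {x}, w a y) ≤ ∑ a ∈ S \ {x}, |w y a| := by
      rw [← Finset.sum_neg_distrib]
      apply Finset.sum_le_sum
      intro a _; rw [hsymm a y]; exact neg_le_abs _
    have b3 : (∑ b ∈ Sᶜ \ Y, |w y b|) + ∑ a ∈ S \ {x}, |w y a|
        = ∑ t ∈ (Sᶜ \ Y) ∪ (S \ {x}), |w y t| := (Finset.sum_union hdisj).symm
    have b4 : (∑ t ∈ (Sᶜ \ Y) ∪ (S \ {x}), |w y t|) ≤ ∑ t ∈ Xᶜ, |w y t| := by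
      apply Finset.sum_le_sum_of_subset_of_nonneg
      · exact Finset.union_subset hE1 hE2
      · intro t _ _; exact abs_nonneg _
    linarith
  linarith [hcU, hcS, hsplitx, hbound]

lemma st18_bdd (w : V → V → ℝ) : BddBelow (Set.range (cutVal w)) :=
  (Set.finite_range _).bddBelow

lemma st18_minLe (w : V → V → ℝ) (S : Finset V) : minCutVal w ≤ cutVal w S :=
  csInf_le (st18_bdd w) ⟨S, rfl⟩

lemma st18_exMin (w : V → V → ℝ) : ∃ S, cutVal w S = minCutVal w := by
  have h : minCutVal w ∈ Set.range (cutVal w) :=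
    (Set.range_nonempty _).csInf_mem (Set.finite_range _)
  obtain ⟨S, hS⟩ := h
  exact ⟨S, hS⟩

lemma st18_minCut_flip (w : V → V → ℝ) (hsymm : ∀ a b, w a b = w b a) (T : Finset V)
    (hflip : ∀ S, cutVal (flipSet w T) S = cutVal w (symmDiff S T) - cutVal w T) :
    minCutVal (flipSet w T) = minCutVal w - cutVal w T := by
  apply le_antisymm
  · obtain ⟨S0, hS0⟩ := st18_exMin w
    have h1 : cutVal (flipSet w T) (symmDiff S0 T) = cutVal w S0 - cutVal w T := by
      rw [hflip, symmDiff_symmDiff_cancel_right]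
    calc minCutVal (flipSet w T) ≤ cutVal (flipSet w T) (symmDiff S0 T) := st18_minLe _ _
      _ = minCutVal w - cutVal w T := by rw [h1, hS0]
  · apply le_csInf (Set.range_nonempty _)
    rintro b ⟨S, rfl⟩
    rw [hflip]
    have := st18_minLe w (symmDiff S T)
    linarith

lemma st18_inter_singleton (X S : Finset V) (a : V) (haX : a ∈ X) (haS : a ∈ S)
    (h : ∀ b ∈ X, b ≠ a → b ∉ S) : X ∩ S = {a} := by
  ext b
  simp only [Finset.mem_inter, Finset.mem_singleton]
  constructor
  · rintro ⟨hbX, hbS⟩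
    by_contra hba
    exact h b hbX hba hbS
  · rintro rfl; exact ⟨haX, haS⟩

lemma st18_ext_abs (w : V → V → ℝ) (hdiag : ∀ a, w a a = 0) (X : Finset V) (x : V)
    (hx : x ∈ X) :
    (∑ t, |w x t|) - ∑ y ∈ X \ {x}, |w x y| = ∑ t ∈ Xᶜ, |w x t| := by
  rw [← Finset.sum_add_sum_compl X (fun t => |w x t|)]
  rw [Finset.sum_eq_sum_sdiff_singleton_add hx (fun y => |w x y|)]
  simp [hdiag x]

lemma st18_notMin (w' : V → V → ℝ) (hsymm' : ∀ a b, w' a b = w' b a)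
    (X S : Finset V) (x : V) (hXS : X ∩ S = {x})
    (hk : min (∑ t ∈ Xᶜ, |w' x t|) (∑ y ∈ X \ {x}, ∑ t ∈ Xᶜ, |w' y t|)
        < ∑ y ∈ X \ {x}, w' x y) :
    cutVal w' S ≠ minCutVal w' := by
  intro hmin
  rcases min_lt_iff.mp hk with h | h
  · have h2 := moveOut w' hsymm' X S x hXS
    have h3 := st18_minLe w' (S \ {x})
    linarith
  · have h2 := moveIn w' hsymm' X S x hXS
    have h3 := st18_minLe w' (S ∪ (X \ {x}))
    linarith

lemma st18_sep_cases {u v z : V} (S : Finset V)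
    (hSep : Separates S ({u, v, z} : Finset V)) :
    ∃ x ∈ ({u, v, z} : Finset V),
      ({u, v, z} : Finset V) ∩ S = {x} ∨ ({u, v, z} : Finset V) ∩ Sᶜ = {x} := by
  set X : Finset V := {u, v, z} with hX
  have hmem : ∀ b, b ∈ X ↔ b = u ∨ b = v ∨ b = z := by
    intro b; simp [hX, Finset.mem_insert, Finset.mem_singleton]
  by_cases hu : u ∈ S <;> by_cases hv : v ∈ S <;> by_cases hz : z ∈ S
  · exact absurd (Finset.inter_eq_left.mpr fun b hb => by
      rcases (hmem b).mp hb with rfl | rfl | rfl <;> assumption) hSep.2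
  · refine ⟨z, (hmem z).mpr (Or.inr (Or.inr rfl)), Or.inr ?_⟩
    apply st18_inter_singleton X Sᶜ z ((hmem z).mpr (Or.inr (Or.inr rfl))) (Finset.mem_compl.mpr hz)
    intro b hb hbz
    rcases (hmem b).mp hb with rfl | rfl | rfl
    · simp [Finset.mem_compl, hu]
    · simp [Finset.mem_compl, hv]
    · exact absurd rfl hbz
  · refine ⟨v, (hmem v).mpr (Or.inr (Or.inl rfl)), Or.inr ?_⟩
    apply st18_inter_singleton X Sᶜ v ((hmem v).mpr (Or.inr (Or.inl rfl))) (Finset.mem_compl.mpr hv)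
    intro b hb hbv
    rcases (hmem b).mp hb with rfl | rfl | rfl
    · simp [Finset.mem_compl, hu]
    · exact absurd rfl hbv
    · simp [Finset.mem_compl, hz]
  · refine ⟨u, (hmem u).mpr (Or.inl rfl), Or.inl ?_⟩
    apply st18_inter_singleton X S u ((hmem u).mpr (Or.inl rfl)) hu
    intro b hb hbu
    rcases (hmem b).mp hb with rfl | rfl | rfl
    · exact absurd rfl hbu
    · exact hv
    · exact hz
  · refine ⟨u, (hmem u).mpr (Or.inl rfl), Or.inr ?_⟩
    apply st18_inter_singleton X Sᶜ u ((hmem u).mpr (Or.inl rfl)) (Finset.mem_compl.mpr hu)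
    intro b hb hbu
    rcases (hmem b).mp hb with rfl | rfl | rfl
    · exact absurd rfl hbu
    · simp [Finset.mem_compl, hv]
    · simp [Finset.mem_compl, hz]
  · refine ⟨v, (hmem v).mpr (Or.inr (Or.inl rfl)), Or.inl ?_⟩
    apply st18_inter_singleton X S v ((hmem v).mpr (Or.inr (Or.inl rfl))) hv
    intro b hb hbv
    rcases (hmem b).mp hb with rfl | rfl | rfl
    · exact hu
    · exact absurd rfl hbv
    · exact hz
  · refine ⟨z, (hmem z).mpr (Or.inr (Or.inr rfl)), Or.inl ?_⟩
    apply st18_inter_singleton X S z ((hmem z).mpr (Or.inr (Or.inr rfl))) hz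
    intro b hb hbz
    rcases (hmem b).mp hb with rfl | rfl | rfl
    · exact hu
    · exact hv
    · exact absurd rfl hbz
  · exact absurd (Finset.eq_empty_iff_forall_notMem.mpr fun b hb => by
      rw [Finset.mem_inter] at hb
      rcases (hmem b).mp hb.1 with rfl | rfl | rfl <;> exact absurd hb.2 (by assumption)) hSep.1

end Helpers

/-- for `X = {u,v,z}` (three distinct nodes) and `X̃ ⊆ X`, if the triangle
score `ν̂_t(X) > 0` then `X` is non-separable in `flip_{X̃}(G)`, the sets `X̃` and `X \ X̃`
are non-separable in `G`, and each pair `(a,b)` with `a ∈ X̃`, `b ∈ X \ X̃` is antipolar. -/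
theorem statement_18 [Fintype V] [DecidableEq V] [Nonempty V]
    (w : V → V → ℝ) (hsymm : ∀ a b, w a b = w b a) (hdiag : ∀ a, w a a = 0)
    (u v z : V) (huv : u ≠ v) (hvz : v ≠ z) (huz : u ≠ z)
    (Xt : Finset V) (hXt : Xt ⊆ {u, v, z})
    (hpos : 0 < sInf ((fun x : V =>
        (∑ y ∈ ({u, v, z} : Finset V) \ {x}, flipSet w Xt x y) -
          min ((∑ t, |w x t|) - ∑ y ∈ ({u, v, z} : Finset V) \ {x}, |w x y|)
              (∑ y ∈ ({u, v, z} : Finset V) \ {x},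
                ((∑ t, |w y t|) - ∑ z' ∈ ({u, v, z} : Finset V) \ {y}, |w y z'|))) ''
      (({u, v, z} : Finset V) : Set V))) :
    NonSepSet (flipSet w Xt) {u, v, z} ∧
    NonSepSet w Xt ∧
    NonSepSet w (({u, v, z} : Finset V) \ Xt) ∧
    ∀ a ∈ Xt, ∀ b ∈ ({u, v, z} : Finset V) \ Xt, nuIdx w {a, b} < 0 := by
  set X : Finset V := {u, v, z} with hX
  set w' : V → V → ℝ := flipSet w Xt with hw'
  have hsymm' : ∀ a b, w' a b = w' b a := flip_symm w hsymm Xt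
  -- unpack hpos
  have hposx : ∀ x ∈ X, 0 <
      (∑ y ∈ X \ {x}, w' x y) -
        min ((∑ t, |w x t|) - ∑ y ∈ X \ {x}, |w x y|)
            (∑ y ∈ X \ {x}, ((∑ t, |w y t|) - ∑ z' ∈ X \ {y}, |w y z'|)) := by
    intro x hx
    refine lt_of_lt_of_le hpos (csInf_le ((Set.toFinite _).bddBelow) ?_)
    exact ⟨x, by simpa using hx, rfl⟩
  have hkey : ∀ x ∈ X,
      min (∑ t ∈ Xᶜ, |w' x t|) (∑ y ∈ X \ {x}, ∑ t ∈ Xᶜ, |w' y t|)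
        < ∑ y ∈ X \ {x}, w' x y := by
    intro x hx
    have h0 := hposx x hx
    have hB : (∑ t, |w x t|) - ∑ y ∈ X \ {x}, |w x y| = ∑ t ∈ Xᶜ, |w' x t| := by
      rw [st18_ext_abs w hdiag X x hx]
      exact Finset.sum_congr rfl fun t _ => (flip_abs w Xt x t).symm
    have hC : (∑ y ∈ X \ {x}, ((∑ t, |w y t|) - ∑ z' ∈ X \ {y}, |w y z'|))
        = ∑ y ∈ X \ {x}, ∑ t ∈ Xᶜ, |w' y t| := by
      apply Finset.sum_congr rfl
      intro y hy
      rw [st18_ext_abs w hdiag X y (Finset.mem_sdiff.mp hy).1]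
      exact Finset.sum_congr rfl fun t _ => (flip_abs w Xt y t).symm
    rw [hB, hC] at h0
    linarith
  -- main non-separability in the flipped graph
  have H1 : NonSepSet w' X := by
    intro S hS hSep
    obtain ⟨x, hxX, hcase⟩ := st18_sep_cases S hSep
    rcases hcase with hc | hc
    · exact st18_notMin w' hsymm' X S x hc (hkey x hxX) hS
    · have hSc : cutVal w' Sᶜ = minCutVal w' := by rw [cutVal_compl w' hsymm', hS]
      exact st18_notMin w' hsymm' X Sᶜ x hc (hkey x hxX) hSc
  -- transfer of min cuts through the flip
  have hflipmin : ∀ S : Finset V, cutVal w S = minCutVal w →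
      cutVal w' (symmDiff S Xt) = minCutVal w' := by
    intro S hS
    rw [hw', cutVal_flip w hsymm Xt, symmDiff_symmDiff_cancel_right, hS,
      st18_minCut_flip w hsymm Xt (cutVal_flip w hsymm Xt)]
  have hXtX : Xt ⊆ X := hXt
  -- structure of min cuts in w
  have hDfact : ∀ S : Finset V, cutVal w S = minCutVal w →
      X ∩ symmDiff S Xt = ∅ ∨ X ∩ symmDiff S Xt = X := by
    intro S hS
    have hD := H1 (symmDiff S Xt) (hflipmin S hS)
    rcases not_and_or.mp hD with h | h
    · exact Or.inl (not_not.mp h)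
    · exact Or.inr (not_not.mp h)
  have H2 : NonSepSet w Xt := by
    intro S hS hSep
    obtain ⟨a, ha⟩ := Finset.nonempty_of_ne_empty hSep.1
    rw [Finset.mem_inter] at ha
    have hns : ¬ Xt ⊆ S := fun h => hSep.2 (Finset.inter_eq_left.mpr h)
    obtain ⟨b, hbXt, hbS⟩ := Finset.not_subset.mp hns
    have haD : a ∉ symmDiff S Xt := by
      simp [Finset.mem_symmDiff, ha.1, ha.2]
    have hbD : b ∈ symmDiff S Xt := by
      simp [Finset.mem_symmDiff, hbXt, hbS]
    rcases hDfact S hS with h | h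
    · have : b ∈ X ∩ symmDiff S Xt := Finset.mem_inter.mpr ⟨hXtX hbXt, hbD⟩
      rw [h] at this; simp at this
    · have : a ∈ X ∩ symmDiff S Xt := by rw [h]; exact hXtX ha.1
      exact haD (Finset.mem_inter.mp this).2
  have H3 : NonSepSet w (X \ Xt) := by
    intro S hS hSep
    obtain ⟨a, ha⟩ := Finset.nonempty_of_ne_empty hSep.1
    rw [Finset.mem_inter, Finset.mem_sdiff] at ha
    have hns : ¬ (X \ Xt) ⊆ S := fun h => hSep.2 (Finset.inter_eq_left.mpr h)
    obtain ⟨b, hbm, hbS⟩ := Finset.not_subset.mp hns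
    rw [Finset.mem_sdiff] at hbm
    have haD : a ∈ symmDiff S Xt := by
      simp [Finset.mem_symmDiff, ha.1.2, ha.2]
    have hbD : b ∉ symmDiff S Xt := by
      simp [Finset.mem_symmDiff, hbm.2, hbS]
    rcases hDfact S hS with h | h
    · have : a ∈ X ∩ symmDiff S Xt := Finset.mem_inter.mpr ⟨ha.1.1, haD⟩
      rw [h] at this; simp at this
    · have : b ∈ X ∩ symmDiff S Xt := by rw [h]; exact hbm.1
      exact hbD (Finset.mem_inter.mp this).2
  refine ⟨H1, H2, H3, ?_⟩
  intro a haXt b hbm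
  rw [Finset.mem_sdiff] at hbm
  have haX : a ∈ X := hXtX haXt
  have hab : a ≠ b := fun h => hbm.2 (h ▸ haXt)
  -- every min cut of w separates {a, b}
  have hsep_all : ∀ S : Finset V, cutVal w S = minCutVal w →
      Separates S ({a, b} : Finset V) := by
    intro S hS
    rcases hDfact S hS with h | h
    · -- X ∩ D = ∅ : a ∈ S, b ∉ S
      have haD : a ∉ symmDiff S Xt := fun hc => by
        have : a ∈ X ∩ symmDiff S Xt := Finset.mem_inter.mpr ⟨haX, hc⟩
        rw [h] at this; simp at this
      have hbD : b ∉ symmDiff S Xt := fun hc => by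
        have : b ∈ X ∩ symmDiff S Xt := Finset.mem_inter.mpr ⟨hbm.1, hc⟩
        rw [h] at this; simp at this
      have haS : a ∈ S := by
        by_contra haS
        exact haD (by simp [Finset.mem_symmDiff, haXt, haS])
      have hbS : b ∉ S := fun hbS =>
        hbD (by simp [Finset.mem_symmDiff, hbm.2, hbS])
      constructor
      · intro hc
        have : a ∈ ({a, b} : Finset V) ∩ S := by simp [haS]
        rw [hc] at this; simp at this
      · intro hc
        have : b ∈ ({a, b} : Finset V) ∩ S := by rw [hc]; simp
        exact hbS (Finset.mem_inter.mp this).2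
    · -- X ∩ D = X : a ∉ S, b ∈ S
      have haD : a ∈ symmDiff S Xt := by
        have : a ∈ X ∩ symmDiff S Xt := by rw [h]; exact haX
        exact (Finset.mem_inter.mp this).2
      have hbD : b ∈ symmDiff S Xt := by
        have : b ∈ X ∩ symmDiff S Xt := by rw [h]; exact hbm.1
        exact (Finset.mem_inter.mp this).2
      have haS : a ∉ S := by
        intro haS
        rw [Finset.mem_symmDiff] at haD
        rcases haD with ⟨_, h2⟩ | ⟨_, h2⟩
        · exact h2 haXt
        · exact h2 haS
      have hbS : b ∈ S := by
        rw [Finset.mem_symmDiff] at hbD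
        rcases hbD with ⟨h1, _⟩ | ⟨h1, _⟩
        · exact h1
        · exact absurd h1 hbm.2
      constructor
      · intro hc
        have : b ∈ ({a, b} : Finset V) ∩ S := by simp [hbS]
        rw [hc] at this; simp at this
      · intro hc
        have : a ∈ ({a, b} : Finset V) ∩ S := by rw [hc]; simp
        exact haS (Finset.mem_inter.mp this).2
  obtain ⟨S0, hS0⟩ := st18_exMin w
  have hPle : sInf (cutVal w '' {S : Finset V | Separates S ({a, b} : Finset V)})
      ≤ minCutVal w :=
    csInf_le ((Set.toFinite _).bddBelow) ⟨S0, hsep_all S0 hS0, hS0⟩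
  have hNne : (cutVal w '' {S : Finset V | ¬ Separates S ({a, b} : Finset V)}).Nonempty :=
    ⟨cutVal w ∅, ∅, by simp [Separates], rfl⟩
  obtain ⟨S1, hS1n, hS1e⟩ := hNne.csInf_mem (Set.toFinite _)
  have hne : cutVal w S1 ≠ minCutVal w := fun hc => hS1n (hsep_all S1 hc)
  have hgt : minCutVal w < cutVal w S1 := lt_of_le_of_ne (st18_minLe w S1) (Ne.symm hne)
  unfold nuIdx
  rw [hS1e] at hgt
  linarith
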